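/- Let P be a closed convex cone in ℝ^d that is spanning (P − P = ℝ^d) and pointed (P ∩ (−P) = {0}). Let λ₁, λ₂ ∈ ℝ^d with ‖λ₁‖ = ‖λ₂‖ = 1, ⟨λ_i|x⟩ ≥ 0 for all x ∈ P (i = 1, 2), and λ₁ ≠ λ₂. Let K₁, K₂ be nonzero separable complex Hilbert spaces, H_i = L²([0,∞), K_i), and V^{(i)}_a = S_{⟨λ_i|a⟩} for a ∈ P. If T : H₁ → H₂ is a bounded operator with T V^{(1)}_a = V^{(2)}_a T and T (V^{(1)}_a)* = (V^{(2)}_a)* T for all a ∈ P, then T = 0. That is, the isometric representations S^{(λ₁,k₁)} and S^{(λ₂,k₂)} are disjoint. -/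

import Mathlib

open MeasureTheory Pointwise

lemma aux_ae_zero {E : Type*} [Zero E] (g : ℝ → E) (u : ℝ) (hu : 0 ≤ u)
    (h : ∀ᵐ x : ℝ, x ∈ Set.Ici (0:ℝ) →
      (if 0 ≤ x - (1+u) then g (x-(1+u)) else 0) = (if 0 ≤ x - u then g (x-u) else 0)) :
    ∀ᵐ x : ℝ, x ∈ Set.Ici (0:ℝ) → g x = 0 := by
  rw [MeasureTheory.ae_iff] at h
  set N : Set ℝ := {x | ¬ (x ∈ Set.Ici (0:ℝ) →
      (if 0 ≤ x - (1+u) then g (x-(1+u)) else 0) = (if 0 ≤ x - u then g (x-u) else 0))} with hNdef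
  have hN : volume N = 0 := h
  set N' : Set ℝ := (fun y : ℝ => y + u) ⁻¹' N with hN'def
  have hN' : volume N' = 0 := by
    rw [hN'def, measure_preimage_add_right]
    exact hN
  set M : Set ℝ := ⋃ n : ℕ, (fun y : ℝ => y - n) ⁻¹' N' with hMdef
  have hM : volume M = 0 := by
    rw [hMdef]
    refine measure_iUnion_null fun n => ?_
    have : (fun y : ℝ => y - (n:ℝ)) = (fun y : ℝ => y + (-(n:ℝ))) := by
      funext y; ring
    rw [this, measure_preimage_add_right]
    exact hN'
  -- key step: pointwise recursion
  have step : ∀ y : ℝ, y ∉ M → 0 ≤ y → g y = if 0 ≤ y - 1 then g (y - 1) else 0 := by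
    intro y hyM hy
    have hyN' : y ∉ N' := by
      intro hmem
      apply hyM
      rw [hMdef]
      refine Set.mem_iUnion.mpr ⟨0, ?_⟩
      simpa using hmem
    have hyN : y + u ∉ N := hyN'
    have hkey : (y + u) ∈ Set.Ici (0:ℝ) →
        (if 0 ≤ (y+u) - (1+u) then g ((y+u)-(1+u)) else 0)
          = (if 0 ≤ (y+u) - u then g ((y+u)-u) else 0) := by
      by_contra hc
      exact hyN hc
    have h1 : (y+u) - (1+u) = y - 1 := by ring
    have h2 : (y+u) - u = y := by ring
    have h3 : (y+u) ∈ Set.Ici (0:ℝ) := by simp; linarith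
    have := hkey h3
    rw [h1, h2, if_pos hy] at this
    exact this.symm
  have key : ∀ n : ℕ, ∀ y : ℝ, y ∉ M → 0 ≤ y → y < n → g y = 0 := by
    intro n
    induction n with
    | zero => intro y _ hy hlt; exact absurd hlt (by simpa using hy)
    | succ n ih =>
      intro y hyM hy hlt
      have := step y hyM hy
      by_cases hc : 0 ≤ y - 1
      · rw [if_pos hc] at this
        rw [this]
        refine ih (y - 1) ?_ hc (by push_cast at hlt ⊢; linarith)
        intro hmem
        rw [hMdef] at hmem
        obtain ⟨m, hm⟩ := Set.mem_iUnion.mp hmem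
        apply hyM
        rw [hMdef]
        refine Set.mem_iUnion.mpr ⟨m + 1, ?_⟩
        simp only [Set.mem_preimage] at hm ⊢
        have : y - ((m+1 : ℕ) : ℝ) = y - 1 - m := by push_cast; ring
        rw [this]; exact hm
      · rw [if_neg hc] at this; exact this
  rw [MeasureTheory.ae_iff]
  refine measure_mono_null ?_ hM
  intro y hy
  simp only [Set.mem_setOf_eq, not_forall] at hy
  obtain ⟨hy0, hgy⟩ := hy
  by_contra hyM
  obtain ⟨n, hn⟩ := exists_nat_gt y
  exact hgy (key n y hyM hy0 hn)

/-- **Statement 14.** Let `P` be a closed convex cone in `ℝ^d`, spanning and pointed,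
and `l₁ ≠ l₂` two unit vectors in the dual cone. Let `K₁, K₂` be nonzero separable
complex Hilbert spaces, `H_i = L²([0,∞), K_i)` and `V^{(i)}_a = S_{⟨l_i|a⟩}`. If
`T : H₁ → H₂` is bounded with `T V¹_a = V²_a T` and `T (V¹_a)* = (V²_a)* T` for all
`a ∈ P`, then `T = 0`: the representations `S^{(l₁,k₁)}` and `S^{(l₂,k₂)}` are
disjoint. -/
theorem stmt_14 {d : ℕ}
    (P : Set (EuclideanSpace ℝ (Fin d)))
    (hPclosed : IsClosed P) (hPconvex : Convex ℝ P)
    (hPcone : ∀ (c : ℝ), 0 ≤ c → ∀ x ∈ P, c • x ∈ P)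
    (hPspan : P - P = Set.univ)
    (hPpointed : P ∩ (-P) = {0})
    (l₁ l₂ : EuclideanSpace ℝ (Fin d)) (hl₁ : ‖l₁‖ = 1) (hl₂ : ‖l₂‖ = 1)
    (hl₁dual : ∀ x ∈ P, 0 ≤ (inner ℝ l₁ x : ℝ))
    (hl₂dual : ∀ x ∈ P, 0 ≤ (inner ℝ l₂ x : ℝ))
    (hne : l₁ ≠ l₂)
    {K₁ K₂ : Type*}
    [NormedAddCommGroup K₁] [InnerProductSpace ℂ K₁] [CompleteSpace K₁]
    [Nontrivial K₁] [TopologicalSpace.SeparableSpace K₁]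
    [NormedAddCommGroup K₂] [InnerProductSpace ℂ K₂] [CompleteSpace K₂]
    [Nontrivial K₂] [TopologicalSpace.SeparableSpace K₂]
    (S₁ : ℝ → (Lp K₁ 2 (volume.restrict (Set.Ici (0:ℝ))) →L[ℂ]
               Lp K₁ 2 (volume.restrict (Set.Ici (0:ℝ)))))
    (hS₁ : ∀ t : ℝ, 0 ≤ t → ∀ f : Lp K₁ 2 (volume.restrict (Set.Ici (0:ℝ))),
      (S₁ t f : ℝ → K₁) =ᵐ[volume.restrict (Set.Ici (0:ℝ))]
        fun x => if 0 ≤ x - t then f (x - t) else 0)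
    (S₂ : ℝ → (Lp K₂ 2 (volume.restrict (Set.Ici (0:ℝ))) →L[ℂ]
               Lp K₂ 2 (volume.restrict (Set.Ici (0:ℝ)))))
    (hS₂ : ∀ t : ℝ, 0 ≤ t → ∀ f : Lp K₂ 2 (volume.restrict (Set.Ici (0:ℝ))),
      (S₂ t f : ℝ → K₂) =ᵐ[volume.restrict (Set.Ici (0:ℝ))]
        fun x => if 0 ≤ x - t then f (x - t) else 0)
    (T : Lp K₁ 2 (volume.restrict (Set.Ici (0:ℝ))) →L[ℂ]
         Lp K₂ 2 (volume.restrict (Set.Ici (0:ℝ))))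
    (hT : ∀ a ∈ P, T.comp (S₁ (inner ℝ l₁ a : ℝ)) = (S₂ (inner ℝ l₂ a : ℝ)).comp T)
    (hT' : ∀ a ∈ P,
      T.comp (ContinuousLinearMap.adjoint (S₁ (inner ℝ l₁ a : ℝ))) =
        (ContinuousLinearMap.adjoint (S₂ (inner ℝ l₂ a : ℝ))).comp T) :
    T = 0 := by
  -- First rule out `l₂ = -l₁` using spanning.
  have hne' : l₂ ≠ -l₁ := by
    intro hEq
    have hzero : ∀ x ∈ P, (inner ℝ l₁ x : ℝ) = 0 := by
      intro x hx
      have h1 := hl₁dual x hx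
      have h2 := hl₂dual x hx
      rw [hEq, inner_neg_left] at h2
      linarith
    have hall : ∀ z : EuclideanSpace ℝ (Fin d), (inner ℝ l₁ z : ℝ) = 0 := by
      intro z
      have hz : z ∈ P - P := by rw [hPspan]; trivial
      obtain ⟨a, ha, b, hb, hab⟩ := Set.mem_sub.mp hz
      rw [← hab, inner_sub_right, hzero a ha, hzero b hb]; ring
    have := hall l₁
    rw [real_inner_self_eq_norm_sq, hl₁] at this
    norm_num at this
  set c : ℝ := inner ℝ l₁ l₂ with hc
  have hll : (inner ℝ l₁ l₁ : ℝ) = 1 := by rw [real_inner_self_eq_norm_sq, hl₁]; norm_num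
  have hl2l2 : (inner ℝ l₂ l₂ : ℝ) = 1 := by rw [real_inner_self_eq_norm_sq, hl₂]; norm_num
  have hc1 : c < 1 := by
    have h0 : (0:ℝ) < ‖l₁ - l₂‖ ^ 2 := by
      have : l₁ - l₂ ≠ 0 := sub_ne_zero.mpr hne
      exact pow_pos (norm_pos_iff.mpr this) 2
    rw [norm_sub_sq_real, hl₁, hl₂] at h0
    simp only [← hc] at h0
    nlinarith
  have hc2 : -1 < c := by
    have hne2 : l₁ + l₂ ≠ 0 := by
      intro hEq
      apply hne'
      rw [eq_neg_iff_add_eq_zero, add_comm]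
      exact hEq
    have h0 : (0:ℝ) < ‖l₁ + l₂‖ ^ 2 := pow_pos (norm_pos_iff.mpr hne2) 2
    rw [norm_add_sq_real, hl₁, hl₂] at h0
    simp only [← hc] at h0
    nlinarith
  have hcsq : (0:ℝ) < 1 - c^2 := by nlinarith
  set x : EuclideanSpace ℝ (Fin d) := (1 - c^2)⁻¹ • (l₂ - c • l₁) with hxdef
  have hx1 : (inner ℝ l₁ x : ℝ) = 0 := by
    rw [hxdef, real_inner_smul_right, inner_sub_right, real_inner_smul_right, hll, ← hc]
    ring
  have hx2 : (inner ℝ l₂ x : ℝ) = 1 := by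
    have hcomm : (inner ℝ l₂ l₁ : ℝ) = c := by rw [hc]; exact (real_inner_comm l₂ l₁).symm
    rw [hxdef, real_inner_smul_right, inner_sub_right, real_inner_smul_right, hl2l2, hcomm]
    field_simp
  have hxmem : x ∈ P - P := by rw [hPspan]; trivial
  obtain ⟨p, hp, q, hq, hpq⟩ := Set.mem_sub.mp hxmem
  have h1pq : (inner ℝ l₁ p : ℝ) = inner ℝ l₁ q := by
    have : (inner ℝ l₁ (p - q) : ℝ) = 0 := by rw [hpq]; exact hx1
    rw [inner_sub_right] at this
    linarith
  set u : ℝ := inner ℝ l₂ q with hu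
  have hu0 : 0 ≤ u := hl₂dual q hq
  have h2p : (inner ℝ l₂ p : ℝ) = 1 + u := by
    have : (inner ℝ l₂ (p - q) : ℝ) = 1 := by rw [hpq]; exact hx2
    rw [inner_sub_right] at this
    linarith
  have hTp := hT p hp
  have hTq := hT q hq
  rw [h1pq] at hTp
  rw [hTq] at hTp
  rw [h2p] at hTp
  -- hTp : (S₂ u).comp T = (S₂ (1+u)).comp T
  ext f : 1
  set g := T f with hg
  have hgeq : S₂ (1 + u) g = S₂ u g := by
    have := congrArg (fun A : Lp K₁ 2 (volume.restrict (Set.Ici (0:ℝ))) →L[ℂ]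
        Lp K₂ 2 (volume.restrict (Set.Ici (0:ℝ))) => A f) hTp
    simpa [ContinuousLinearMap.comp_apply] using this.symm
  have hA := hS₂ (1 + u) (by linarith) g
  have hB := hS₂ u hu0 g
  rw [hgeq] at hA
  have hAB : (fun x : ℝ => if 0 ≤ x - (1+u) then (g : ℝ → K₂) (x-(1+u)) else 0)
      =ᵐ[volume.restrict (Set.Ici (0:ℝ))]
      (fun x : ℝ => if 0 ≤ x - u then (g : ℝ → K₂) (x-u) else 0) :=
    hA.symm.trans hB
  have hAB' : ∀ᵐ x : ℝ, x ∈ Set.Ici (0:ℝ) →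
      (if 0 ≤ x - (1+u) then (g : ℝ → K₂) (x-(1+u)) else 0)
        = (if 0 ≤ x - u then (g : ℝ → K₂) (x-u) else 0) :=
    (ae_restrict_iff' measurableSet_Ici).mp hAB
  have hzero := aux_ae_zero (g : ℝ → K₂) u hu0 hAB'
  have hzero' : (g : ℝ → K₂) =ᵐ[volume.restrict (Set.Ici (0:ℝ))] 0 :=
    (ae_restrict_iff' measurableSet_Ici).mpr hzero
  have : g = 0 := by
    apply Lp.ext
    exact hzero'.trans (Lp.coeFn_zero K₂ 2 (volume.restrict (Set.Ici (0:ℝ)))).symm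
  simp only [ContinuousLinearMap.zero_apply]
  exact this
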